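/- Let (A, B, C) be a recollement of abelian categories with enough projectives. If i*(P(A))-resolutions are considered, one has gl.dim C ≤ gl.dim B + sup{pd_C j*(P) : P ∈ P(B)}. In particular, if i^! or j_* is exact, then gl.dim C ≤ gl.dim B. -/

import Mathlib

open CategoryTheory CategoryTheory.Limits

attribute [local instance] Abelian.hasFiniteBiproducts

universe v₁ v₂ v₃ u₁ u₂ u₃

/-- A recollement of abelian categories. -/
structure Recollement (A : Type u₁) (B : Type u₂) (C : Type u₃)
    [Category.{v₁} A] [Category.{v₂} B] [Category.{v₃} C]
    [Abelian A] [Abelian B] [Abelian C] where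
  /-- the functor `i^*` -/
  iStar : B ⥤ A
  /-- the functor `i_*` -/
  iLower : A ⥤ B
  /-- the functor `i^!` -/
  iShriek : B ⥤ A
  /-- the functor `j_!` -/
  jLower : C ⥤ B
  /-- the functor `j^*` -/
  jStar : B ⥤ C
  /-- the functor `j_*` -/
  jUpper : C ⥤ B
  adj₁ : iStar ⊣ iLower
  adj₂ : iLower ⊣ iShriek
  adj₃ : jLower ⊣ jStar
  adj₄ : jStar ⊣ jUpper
  iLower_preservesFiniteLimits : PreservesFiniteLimits iLower
  iLower_preservesFiniteColimits : PreservesFiniteColimits iLower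
  jStar_preservesFiniteLimits : PreservesFiniteLimits jStar
  jStar_preservesFiniteColimits : PreservesFiniteColimits jStar
  iStar_preservesFiniteColimits : PreservesFiniteColimits iStar
  iShriek_preservesFiniteLimits : PreservesFiniteLimits iShriek
  jLower_preservesFiniteColimits : PreservesFiniteColimits jLower
  jUpper_preservesFiniteLimits : PreservesFiniteLimits jUpper
  iLower_full : iLower.Full
  iLower_faithful : iLower.Faithful
  jLower_full : jLower.Full
  jLower_faithful : jLower.Faithful
  jUpper_full : jUpper.Full
  jUpper_faithful : jUpper.Faithful
  im_eq_ker : ∀ b : B, IsZero (jStar.obj b) ↔ ∃ a : A, Nonempty (iLower.obj a ≅ b)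

variable {A : Type u₁} [Category.{v₁} A] [Abelian A]

/-- A resolving subcategory: contains the projectives, closed under extensions
and under kernels of epimorphisms (given by short exact sequences). -/
structure IsResolving (X : Set A) : Prop where
  projective_mem : ∀ P : A, Projective P → P ∈ X
  ext_closed : ∀ S : ShortComplex A, S.ShortExact → S.X₁ ∈ X → S.X₃ ∈ X → S.X₂ ∈ X
  ker_epi_closed : ∀ S : ShortComplex A, S.ShortExact → S.X₂ ∈ X → S.X₃ ∈ X → S.X₁ ∈ X

/-- `ResLE X M n` : there is an exact sequence `0 → X_n → ⋯ → X_0 → M → 0`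
with all `X_i ∈ X`. -/
inductive ResLE (X : Set A) : A → ℕ → Prop
  | zero {M X₀ : A} (e : X₀ ≅ M) (hX₀ : X₀ ∈ X) : ResLE X M 0
  | succ {M K X₀ : A} {n : ℕ} (f : K ⟶ X₀) (g : X₀ ⟶ M) (w : f ≫ g = 0)
      (hse : (ShortComplex.mk f g w).ShortExact) (hX₀ : X₀ ∈ X)
      (hK : ResLE X K n) : ResLE X M (n + 1)

/-- The `X`-resolution dimension of an object `M` (`⊤` if there is no finite
`X`-resolution). -/
noncomputable def resDim (X : Set A) (M : A) : ℕ∞ :=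
  sInf {n : ℕ∞ | ∃ m : ℕ, ResLE X M m ∧ n = (m : ℕ∞)}

/-- The `X`-resolution dimension of the whole category. -/
noncomputable def resDimCat (X : Set A) : ℕ∞ :=
  ⨆ M : A, resDim X M

/-- The closure of a class of objects under finite direct sums and direct summands. -/
def addClosure (D : Set A) : Set A :=
  {a | ∃ (n : ℕ) (f : Fin n → A), (∀ i, f i ∈ D) ∧
    ∃ (s : a ⟶ ⨁ f) (r : ⨁ f ⟶ a), s ≫ r = 𝟙 a}


open ZeroObject

lemma resLE_of_iso {X : Set A} {M M' : A} (e : M ≅ M') {n : ℕ} (h : ResLE X M n) :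
    ResLE X M' n := by
  cases h with
  | zero e' h => exact .zero (e' ≪≫ e) h
  | succ f g w hse hX₀ hK =>
    have w' : f ≫ (g ≫ e.hom) = 0 := by rw [← Category.assoc, w, zero_comp]
    exact .succ f (g ≫ e.hom) w'
      (ShortComplex.shortExact_of_iso
        (ShortComplex.isoMk (S₁ := ShortComplex.mk f g w) (S₂ := ShortComplex.mk f (g ≫ e.hom) w')
          (Iso.refl _) (Iso.refl _) e (by simp) (by simp)) hse) hX₀ hK

lemma resLE_zero_obj {Z : A} (hZ : IsZero Z) : ∀ n, ResLE {d : A | Projective d} Z n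
  | 0 => .zero (Iso.refl Z) hZ.projective
  | n+1 => by
    refine .succ (𝟙 Z) (𝟙 Z) (hZ.eq_of_src _ _) ?_ hZ.projective (resLE_zero_obj hZ n)
    exact ShortComplex.ShortExact.mk' (ShortComplex.exact_of_isZero_X₂ _ hZ)
      inferInstance inferInstance

lemma resLE_succ {M : A} {n : ℕ} (h : ResLE {d : A | Projective d} M n) :
    ResLE {d : A | Projective d} M (n + 1) := by
  induction h with
  | zero e hX₀ =>
    refine .succ (0 : (0 : A) ⟶ _) e.hom zero_comp ?_ hX₀ (resLE_zero_obj (isZero_zero A) 0)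
    exact ShortComplex.Splitting.shortExact
      ⟨0, e.inv, (isZero_zero A).eq_of_src _ _, e.inv_hom_id, by simp⟩
  | succ f g w hse hX₀ hK ih => exact .succ f g w hse hX₀ ih

lemma resLE_mono {M : A} {m n : ℕ} (hmn : m ≤ n) (h : ResLE {d : A | Projective d} M m) :
    ResLE {d : A | Projective d} M n := by
  induction n, hmn using Nat.le_induction with
  | base => exact h
  | succ n hmn ih => exact resLE_succ ih

lemma snake0_w₁ {S₁ S₂ : ShortComplex A} (φ : S₁ ⟶ S₂) :
    (kernel.ι φ.τ₁ ≫ S₁.f) ≫ φ.τ₂ = 0 := by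
  rw [Category.assoc, ← φ.comm₁₂, ← Category.assoc, kernel.condition, zero_comp]

lemma snake0_w₂ {S₁ S₂ : ShortComplex A} (φ : S₁ ⟶ S₂) :
    (kernel.ι φ.τ₂ ≫ S₁.g) ≫ φ.τ₃ = 0 := by
  rw [Category.assoc, ← φ.comm₂₃, ← Category.assoc, kernel.condition, zero_comp]

lemma snake0_w {S₁ S₂ : ShortComplex A} (φ : S₁ ⟶ S₂) :
    kernel.lift φ.τ₂ (kernel.ι φ.τ₁ ≫ S₁.f) (snake0_w₁ φ) ≫
      kernel.lift φ.τ₃ (kernel.ι φ.τ₂ ≫ S₁.g) (snake0_w₂ φ) = 0 := by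
  rw [← cancel_mono (kernel.ι φ.τ₃)]
  simp [S₁.zero]

lemma snake0 {S₁ S₂ : ShortComplex A} (h₁ : S₁.ShortExact) (h₂ : S₂.ShortExact)
    (φ : S₁ ⟶ S₂) (e₁ : Epi φ.τ₁) (e₃ : Epi φ.τ₃) :
    Epi φ.τ₂ ∧ (ShortComplex.mk _ _ (snake0_w φ)).ShortExact := by
  have hm₁ := h₁.mono_f
  have he₁ := h₁.epi_g
  have hm₂ := h₂.mono_f
  have he₂ := h₂.epi_g
  constructor
  · rw [epi_iff_surjective_up_to_refinements]
    intro T y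
    obtain ⟨T₁, π₁, hπ₁, x₃, hx₃⟩ := surjective_up_to_refinements_of_epi φ.τ₃ (y ≫ S₂.g)
    obtain ⟨T₂, π₂, hπ₂, x₂, hx₂⟩ := surjective_up_to_refinements_of_epi S₁.g x₃
    have hz : (π₂ ≫ π₁ ≫ y - x₂ ≫ φ.τ₂) ≫ S₂.g = 0 := by
      simp only [Preadditive.sub_comp, Category.assoc, φ.comm₂₃]
      rw [← Category.assoc x₂, ← hx₂, Category.assoc, ← hx₃]
      simp
    obtain ⟨T₃, π₃, hπ₃, x₁', hx₁'⟩ := h₂.exact.exact_up_to_refinements _ hz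
    obtain ⟨T₄, π₄, hπ₄, x₁, hx₁⟩ := surjective_up_to_refinements_of_epi φ.τ₁ x₁'
    refine ⟨T₄, π₄ ≫ π₃ ≫ π₂ ≫ π₁, inferInstance, π₄ ≫ π₃ ≫ x₂ + x₁ ≫ S₁.f, ?_⟩
    have : x₁ ≫ S₁.f ≫ φ.τ₂ = π₄ ≫ π₃ ≫ (π₂ ≫ π₁ ≫ y - x₂ ≫ φ.τ₂) := by
      rw [← φ.comm₁₂, ← Category.assoc, ← hx₁, Category.assoc, ← hx₁']
    simp only [Preadditive.add_comp, Category.assoc, this]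
    simp [Preadditive.comp_sub]
  · refine ShortComplex.ShortExact.mk' ?_ ?_ ?_
    · rw [ShortComplex.exact_iff_exact_up_to_refinements]
      intro T y hy
      dsimp at y hy ⊢
      have h1 : (y ≫ kernel.ι φ.τ₂) ≫ S₁.g = 0 := by
        have := hy =≫ kernel.ι φ.τ₃
        simpa using this
      obtain ⟨T₁, π₁, hπ₁, x₁, hx₁⟩ := h₁.exact.exact_up_to_refinements _ h1
      have hx₁0 : x₁ ≫ φ.τ₁ = 0 := by
        rw [← cancel_mono S₂.f]
        rw [Category.assoc, φ.comm₁₂, ← Category.assoc, ← hx₁]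
        simp [kernel.condition]
      refine ⟨T₁, π₁, hπ₁, kernel.lift φ.τ₁ x₁ hx₁0, ?_⟩
      rw [← cancel_mono (kernel.ι φ.τ₂)]
      simp [hx₁]
    · dsimp
      exact mono_of_mono_fac (kernel.lift_ι _ _ _)
    · dsimp
      rw [epi_iff_surjective_up_to_refinements]
      intro T y
      have h0 : (y ≫ kernel.ι φ.τ₃) ≫ φ.τ₃ = 0 := by simp [kernel.condition]
      obtain ⟨T₁, π₁, hπ₁, x₂, hx₂⟩ := surjective_up_to_refinements_of_epi S₁.g (y ≫ kernel.ι φ.τ₃)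
      have h2 : (x₂ ≫ φ.τ₂) ≫ S₂.g = 0 := by
        rw [Category.assoc, φ.comm₂₃, ← Category.assoc, ← hx₂]
        simp only [Category.assoc, kernel.condition, comp_zero]
      obtain ⟨T₂, π₂, hπ₂, x₁', hx₁'⟩ := h₂.exact.exact_up_to_refinements _ h2
      obtain ⟨T₃, π₃, hπ₃, x₁, hx₁⟩ := surjective_up_to_refinements_of_epi φ.τ₁ x₁'
      have hu : (π₃ ≫ π₂ ≫ x₂ - x₁ ≫ S₁.f) ≫ φ.τ₂ = 0 := by
        simp only [Preadditive.sub_comp, Category.assoc]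
        rw [← φ.comm₁₂, ← Category.assoc x₁, ← hx₁, Category.assoc, ← hx₁']
        simp
      refine ⟨T₃, π₃ ≫ π₂ ≫ π₁, inferInstance, kernel.lift φ.τ₂ _ hu, ?_⟩
      rw [← cancel_mono (kernel.ι φ.τ₃)]
      simp only [Category.assoc, kernel.lift_ι, kernel.lift_ι_assoc]
      simp only [Preadditive.sub_comp, Category.assoc, ShortComplex.zero, comp_zero, sub_zero]
      rw [← hx₂]


lemma resLE_step {M : A} {n m : ℕ} (h : ResLE {d : A | Projective d} M n) (hnm : n ≤ m + 1) :
    ∃ (K X₀ : A) (f : K ⟶ X₀) (g : X₀ ⟶ M) (w : f ≫ g = 0),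
      (ShortComplex.mk f g w).ShortExact ∧ Projective X₀ ∧ ResLE {d : A | Projective d} K m := by
  cases h with
  | zero e hX₀ =>
    refine ⟨0, _, 0, e.hom, zero_comp, ?_, hX₀, resLE_zero_obj (isZero_zero A) m⟩
    exact ShortComplex.Splitting.shortExact
      ⟨0, e.inv, (isZero_zero A).eq_of_src _ _, e.inv_hom_id, by simp⟩
  | succ f g w hse hX₀ hK =>
    exact ⟨_, _, f, g, w, hse, hX₀, resLE_mono (by omega) hK⟩

lemma resLE_ext {S : ShortComplex A} (hS : S.ShortExact) {n : ℕ}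
    (h₁ : ResLE {d : A | Projective d} S.X₁ n) (h₃ : ResLE {d : A | Projective d} S.X₃ n) :
    ResLE {d : A | Projective d} S.X₂ n := by
  induction n generalizing S with
  | zero =>
    cases h₁ with
    | zero e₁ hP₁ =>
      cases h₃ with
      | zero e₃ hP₃ =>
        haveI : Projective S.X₁ := Projective.of_iso e₁ hP₁
        haveI : Projective S.X₃ := Projective.of_iso e₃ hP₃
        exact .zero hS.splittingOfProjective.isoBinaryBiproduct.symm
          (inferInstance : Projective (S.X₁ ⊞ S.X₃))
  | succ n ih =>
    obtain ⟨K₁, P₁, ι₁, p₁, w₁, hse₁, hP₁, hK₁⟩ := resLE_step h₁ le_rfl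
    obtain ⟨K₃, P₃, ι₃, p₃, w₃, hse₃, hP₃, hK₃⟩ := resLE_step h₃ le_rfl
    haveI := hS.epi_g
    haveI := hse₁.epi_g
    haveI := hse₃.epi_g
    haveI := hP₁
    haveI := hP₃
    set ψ : P₃ ⟶ S.X₂ := Projective.factorThru p₃ S.g with hψ
    set φm : P₁ ⊞ P₃ ⟶ S.X₂ := biprod.desc (p₁ ≫ S.f) ψ with hφm
    have hsp : (ShortComplex.mk (biprod.inl : P₁ ⟶ P₁ ⊞ P₃) biprod.snd biprod.inl_snd).ShortExact :=
      ShortComplex.Splitting.shortExact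
        ⟨biprod.fst, biprod.inr, by simp, by simp, by simp [biprod.total]⟩
    have comm₂₃ : φm ≫ S.g = (biprod.snd : P₁ ⊞ P₃ ⟶ P₃) ≫ p₃ := by
      apply biprod.hom_ext' <;>
        simp [hφm, hψ, reassoc_of% S.zero, Projective.factorThru_comp]
    set φ : (ShortComplex.mk (biprod.inl : P₁ ⟶ P₁ ⊞ P₃) biprod.snd biprod.inl_snd) ⟶ S :=
      ⟨p₁, φm, p₃, by simp [hφm], comm₂₃⟩ with hφ
    obtain ⟨hepi, hker⟩ := snake0 hsp hS φ (by simpa [hφ] using (inferInstance : Epi p₁))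
      (by simpa [hφ] using (inferInstance : Epi p₃))
    have hk₁ : ResLE {d : A | Projective d} (kernel φ.τ₁) n :=
      resLE_of_iso (IsLimit.conePointUniqueUpToIso hse₁.fIsKernel (kernelIsKernel p₁)) hK₁
    have hk₃ : ResLE {d : A | Projective d} (kernel φ.τ₃) n :=
      resLE_of_iso (IsLimit.conePointUniqueUpToIso hse₃.fIsKernel (kernelIsKernel p₃)) hK₃
    have hmid : ResLE {d : A | Projective d} (kernel φ.τ₂) n := ih hker hk₁ hk₃
    haveI : Epi φm := hepi
    refine .succ (kernel.ι φm) φm (kernel.condition φm) ?_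
      (inferInstance : Projective (P₁ ⊞ P₃)) hmid
    exact ShortComplex.ShortExact.mk'
      (ShortComplex.exact_of_f_is_kernel _ (kernelIsKernel φm)) inferInstance inferInstance

lemma resLE_quot {S : ShortComplex A} (hS : S.ShortExact) {s t : ℕ}
    (h₂ : ResLE {d : A | Projective d} S.X₂ s) (h₁ : ResLE {d : A | Projective d} S.X₁ t) :
    ResLE {d : A | Projective d} S.X₃ (max s t + 1) := by
  obtain ⟨L, Q, f', g', w', hse', hQ, hL⟩ := resLE_step (m := max s t) h₂ (by omega)
  haveI := hS.epi_g
  haveI := hse'.epi_g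
  set h : Q ⟶ S.X₃ := g' ≫ S.g with hh
  have hsp : (ShortComplex.mk (0 : (0 : A) ⟶ S.X₃) (𝟙 S.X₃) zero_comp).ShortExact :=
    ShortComplex.Splitting.shortExact
      ⟨0, 𝟙 _, (isZero_zero A).eq_of_src _ _, by simp, by simp⟩
  set φ : (ShortComplex.mk f' g' w') ⟶ (ShortComplex.mk (0 : (0 : A) ⟶ S.X₃) (𝟙 S.X₃) zero_comp) :=
    ⟨0, h, S.g, by simp [hh, reassoc_of% w'], by simp [hh]⟩ with hφ
  have hτ₁ : Epi φ.τ₁ := ⟨fun g h _ => (isZero_zero A).eq_of_src g h⟩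
  obtain ⟨-, hker⟩ := snake0 hse' hsp φ hτ₁ (by simpa [hφ] using (inferInstance : Epi S.g))
  have hkL : ResLE {d : A | Projective d} (kernel φ.τ₁) (max s t) :=
    resLE_of_iso (kernelZeroIsoSource).symm hL
  have hkK : ResLE {d : A | Projective d} (kernel φ.τ₃) (max s t) :=
    resLE_of_iso (IsLimit.conePointUniqueUpToIso hS.fIsKernel (kernelIsKernel S.g))
      (resLE_mono (le_max_right s t) h₁)
  have hmid : ResLE {d : A | Projective d} (kernel φ.τ₂) (max s t) := resLE_ext hker hkL hkK
  haveI : Epi h := epi_comp g' S.g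
  exact .succ (kernel.ι h) h (kernel.condition h)
    (ShortComplex.ShortExact.mk' (ShortComplex.exact_of_f_is_kernel _ (kernelIsKernel h))
      inferInstance inferInstance) hQ hmid

lemma resLE_trans {Y : Set A} {M : A} {n k : ℕ} (h : ResLE Y M n)
    (hY : ∀ y ∈ Y, ResLE {d : A | Projective d} y k) :
    ResLE {d : A | Projective d} M (n + k) := by
  induction h with
  | zero e hX₀ => exact resLE_mono (by omega) (resLE_of_iso e (hY _ hX₀))
  | succ f g w hse hX₀ hK ih =>
    refine resLE_mono ?_ (resLE_quot hse (hY _ hX₀) ih)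
    rw [Nat.max_eq_right (Nat.le_add_left k _)]
    omega

lemma resLE_map {B : Type u₂} [Category.{v₂} B] [Abelian B] (F : A ⥤ B)
    [F.PreservesZeroMorphisms] [PreservesFiniteLimits F] [PreservesFiniteColimits F]
    {X : Set A} {M : A} {n : ℕ} (h : ResLE X M n) :
    ResLE {b : B | ∃ a ∈ X, Nonempty (F.obj a ≅ b)} (F.obj M) n := by
  induction h with
  | zero e hX₀ => exact .zero (F.mapIso e) ⟨_, hX₀, ⟨Iso.refl _⟩⟩
  | succ f g w hse hX₀ hK ih =>
    have w' : F.map f ≫ F.map g = 0 := by rw [← F.map_comp, w, F.map_zero]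
    exact .succ (F.map f) (F.map g) w' (hse.map_of_exact F) ⟨_, hX₀, ⟨Iso.refl _⟩⟩ ih

lemma resDim_le_of_resLE {X : Set A} {M : A} {n : ℕ} (h : ResLE X M n) :
    resDim X M ≤ (n : ℕ∞) :=
  sInf_le ⟨n, h, rfl⟩

lemma resLE_of_resDim_le {M : A} {n : ℕ} (h : resDim {d : A | Projective d} M ≤ (n : ℕ∞)) :
    ResLE {d : A | Projective d} M n := by
  have hlt : resDim {d : A | Projective d} M < ((n + 1 : ℕ) : ℕ∞) :=
    lt_of_le_of_lt h (by exact_mod_cast Nat.lt_succ_self n)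
  obtain ⟨x, ⟨m, hm, rfl⟩, hlt'⟩ := sInf_lt_iff.mp hlt
  exact resLE_mono (by exact_mod_cast Nat.lt_succ_iff.mp (by exact_mod_cast hlt')) hm

section RecollementAux

variable {A₀ : Type u₁} {B₀ : Type u₂} {C₀ : Type u₃}
    [Category.{v₁} A₀] [Category.{v₂} B₀] [Category.{v₃} C₀]
    [Abelian A₀] [Abelian B₀] [Abelian C₀] (R : Recollement A₀ B₀ C₀)

lemma jStar_iLower_isZero (a : A₀) : IsZero (R.jStar.obj (R.iLower.obj a)) :=
  (R.im_eq_ker _).2 ⟨a, ⟨Iso.refl _⟩⟩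

lemma iShriek_jUpper_isZero (Y : C₀) : IsZero (R.iShriek.obj (R.jUpper.obj Y)) := by
  rw [IsZero.iff_id_eq_zero]
  apply (R.adj₂.homEquiv _ _).symm.injective
  apply (R.adj₄.homEquiv _ _).symm.injective
  exact (jStar_iLower_isZero R _).eq_of_src _ _

lemma jUpper_preservesEpi
    (h : PreservesFiniteLimits R.iShriek ∧ PreservesFiniteColimits R.iShriek) :
    R.jUpper.PreservesEpimorphisms := by
  haveI := h.2
  haveI := R.jStar_preservesFiniteLimits
  haveI := R.jStar_preservesFiniteColimits
  haveI := R.iLower_preservesFiniteLimits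
  haveI := R.iLower_full
  haveI := R.iLower_faithful
  haveI := R.jUpper_full
  haveI := R.jUpper_faithful
  haveI := R.jUpper_preservesFiniteLimits
  constructor
  intro Y Z g hg
  haveI := hg
  have h1 : IsZero (R.jStar.obj (cokernel (R.jUpper.map g))) := by
    have e1 : R.jStar.obj (cokernel (R.jUpper.map g)) ≅
        cokernel (R.jStar.map (R.jUpper.map g)) := PreservesCokernel.iso R.jStar _
    have e2 : cokernel (R.jStar.map (R.jUpper.map g)) ≅ cokernel g :=
      cokernel.mapIso _ g (asIso (R.adj₄.counit.app Y)) (asIso (R.adj₄.counit.app Z))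
        (by simpa using R.adj₄.counit.naturality g)
    have hz : IsZero (cokernel g) := IsZero.of_iso (isZero_zero C₀) (cokernel.ofEpi g)
    exact IsZero.of_iso (IsZero.of_iso hz e2) e1
  obtain ⟨a, ⟨ea⟩⟩ := (R.im_eq_ker _).1 h1
  have h2 : IsZero (R.iShriek.obj (cokernel (R.jUpper.map g))) := by
    rw [IsZero.iff_id_eq_zero]
    rw [← cancel_epi (R.iShriek.map (cokernel.π (R.jUpper.map g)))]
    exact (iShriek_jUpper_isZero R Z).eq_of_src _ _
  have h3 : IsZero a := by
    have h5 : IsZero (R.iShriek.obj (R.iLower.obj a)) := IsZero.of_iso h2 (R.iShriek.mapIso ea)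
    exact IsZero.of_iso h5 (asIso (R.adj₂.unit.app a))
  have h4 : IsZero (cokernel (R.jUpper.map g)) :=
    IsZero.of_iso (R.iLower.map_isZero h3) ea.symm
  exact Preadditive.epi_of_isZero_cokernel _ h4

end RecollementAux

/-- `gl.dim C ≤ gl.dim B + sup{pd_C j*(P) : P ∈ P(B)}`; in particular, if `i^!` or `j_*`
is exact, then `gl.dim C ≤ gl.dim B`. -/
theorem gldim_C_le
    (A : Type u₁) (B : Type u₂) (C : Type u₃)
    [Category.{v₁} A] [Category.{v₂} B] [Category.{v₃} C]
    [Abelian A] [Abelian B] [Abelian C]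
    [EnoughProjectives A] [EnoughProjectives B] [EnoughProjectives C]
    (R : Recollement A B C) :
    (resDimCat {c : C | Projective c} ≤ resDimCat {b : B | Projective b} +
      ⨆ (P : B) (_ : Projective P), resDim {c : C | Projective c} (R.jStar.obj P)) ∧
    (((PreservesFiniteLimits R.iShriek ∧ PreservesFiniteColimits R.iShriek) ∨
      (PreservesFiniteLimits R.jUpper ∧ PreservesFiniteColimits R.jUpper)) →
      resDimCat {c : C | Projective c} ≤ resDimCat {b : B | Projective b}) := by
  haveI := R.jStar_preservesFiniteLimits
  haveI := R.jStar_preservesFiniteColimits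
  haveI := R.jLower_full
  haveI := R.jLower_faithful
  haveI : R.jStar.PreservesZeroMorphisms := inferInstance
  have main : resDimCat {c : C | Projective c} ≤ resDimCat {b : B | Projective b} +
      ⨆ (P : B) (_ : Projective P), resDim {c : C | Projective c} (R.jStar.obj P) := by
    by_cases hb : resDimCat {b : B | Projective b} = ⊤
    · rw [hb, top_add]; exact le_top
    by_cases hs : (⨆ (P : B) (_ : Projective P),
        resDim {c : C | Projective c} (R.jStar.obj P)) = ⊤
    · rw [hs, add_top]; exact le_top
    obtain ⟨nB, hnB⟩ : ∃ n : ℕ, resDimCat {b : B | Projective b} = (n : ℕ∞) := by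
      obtain ⟨n, hn⟩ := WithTop.ne_top_iff_exists.mp hb
      exact ⟨n, by exact_mod_cast hn.symm⟩
    obtain ⟨k, hk⟩ : ∃ n : ℕ, (⨆ (P : B) (_ : Projective P),
        resDim {c : C | Projective c} (R.jStar.obj P)) = (n : ℕ∞) := by
      obtain ⟨n, hn⟩ := WithTop.ne_top_iff_exists.mp hs
      exact ⟨n, by exact_mod_cast hn.symm⟩
    refine iSup_le fun M => ?_
    have hB : ResLE {b : B | Projective b} (R.jLower.obj M) nB := by
      refine resLE_of_resDim_le ?_
      rw [← hnB]
      exact le_iSup (fun N => resDim {b : B | Projective b} N) (R.jLower.obj M)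
    have hY := resLE_map R.jStar hB
    have hM : ResLE {c : C | ∃ b ∈ {b : B | Projective b}, Nonempty (R.jStar.obj b ≅ c)} M nB :=
      resLE_of_iso (asIso (R.adj₃.unit.app M)).symm hY
    have hfin : ∀ y ∈ {c : C | ∃ b ∈ {b : B | Projective b}, Nonempty (R.jStar.obj b ≅ c)},
        ResLE {c : C | Projective c} y k := by
      rintro y ⟨P, hP, ⟨e⟩⟩
      refine resLE_of_iso e (resLE_of_resDim_le ?_)
      rw [← hk]
      exact le_iSup₂ (f := fun (P : B) (_ : Projective P) =>
        resDim {c : C | Projective c} (R.jStar.obj P)) P hP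
    have hM2 := resLE_trans hM hfin
    refine (resDim_le_of_resLE hM2).trans ?_
    rw [hnB, hk]
    exact_mod_cast le_rfl
  refine ⟨main, fun hyp => ?_⟩
  have hpe : R.jUpper.PreservesEpimorphisms := by
    rcases hyp with h | h
    · exact jUpper_preservesEpi R h
    · haveI := h.2
      infer_instance
  have hsup : (⨆ (P : B) (_ : Projective P),
      resDim {c : C | Projective c} (R.jStar.obj P)) = 0 := by
    refine le_antisymm (iSup_le fun P => iSup_le fun hP => ?_) zero_le
    haveI := hpe
    have hproj : Projective (R.jStar.obj P) := R.adj₄.map_projective P hP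
    simpa using resDim_le_of_resLE (X := {c : C | Projective c}) (ResLE.zero (Iso.refl _) hproj)
  refine main.trans ?_
  rw [hsup, add_zero]
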